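/- Let I ⊔ I′ = {i₁ < … < i_k} be a partition into two disjoint sets, and let I_odd, I_even be the odd/even-indexed subsets. If a set B of indices is an interval of {i₁,…,i_k} (contiguous in the ordering restricted to these elements) and both |B∩I| ≤ c and |B∩I′| ≤ c for some capacity c, then |B∩I_odd| ≤ c and |B∩I_even| ≤ c. -/

import Mathlib

open Finset

private lemma filter_mod_range (n : ℕ) :
    ((range n).filter (fun x => x % 2 = 0)).card = (n + 1) / 2 ∧
    ((range n).filter (fun x => x % 2 = 1)).card = n / 2 := by
  induction n with
  | zero => simp
  | succ n ih =>
    obtain ⟨h0, h1⟩ := ih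
    have hn0 : n ∉ (range n).filter (fun x => x % 2 = 0) := by simp
    have hn1 : n ∉ (range n).filter (fun x => x % 2 = 1) := by simp
    rw [range_add_one, filter_insert, filter_insert]
    by_cases h : n % 2 = 0
    · rw [if_pos h, if_neg (by omega), card_insert_of_notMem hn0, h0, h1]
      omega
    · rw [if_neg h, if_pos (by omega), card_insert_of_notMem hn1, h0, h1]
      omega

private lemma filter_mod_Icc (a b r : ℕ) :
    ((Finset.Icc a b).filter (fun x => x % 2 = r)).card ≤ (b - a + 2) / 2 := by
  rcases lt_or_ge b a with h | h
  · rw [Finset.Icc_eq_empty_of_lt h]; simp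
  by_cases hr : r < 2
  · have hunion : ((range (b + 1)).filter (fun x => x % 2 = r)) =
        ((Finset.Icc a b).filter (fun x => x % 2 = r)) ∪
        ((range a).filter (fun x => x % 2 = r)) := by
      ext x; simp only [mem_filter, mem_range, mem_union, Finset.mem_Icc]; omega
    have hdis : Disjoint ((Finset.Icc a b).filter (fun x => x % 2 = r))
        ((range a).filter (fun x => x % 2 = r)) := by
      rw [Finset.disjoint_left]
      intro x hx hx'
      simp only [mem_filter, Finset.mem_Icc, mem_range] at hx hx'
      omega
    have hcard := Finset.card_union_of_disjoint hdis
    rw [← hunion] at hcard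
    obtain ⟨e0, e1⟩ := filter_mod_range (b + 1)
    obtain ⟨f0, f1⟩ := filter_mod_range a
    interval_cases r
    · rw [e0, f0] at hcard; omega
    · rw [e1, f1] at hcard; omega
  · have : ((Finset.Icc a b).filter (fun x => x % 2 = r)) = ∅ := by
      ext x; simp only [mem_filter, Finset.mem_Icc, Finset.notMem_empty, iff_false]
      rintro ⟨-, hx⟩; omega
    rw [this]; simp

/-- Feasibility preservation for the alternating partition: with the ordered
elements `i₁ < … < i_k` identified with `Fin k`, `I ⊔ I′` a partition, and
`I_odd`/`I_even` the odd/even-indexed subsets, if `B` is an interval of the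
ordering and `|B ∩ I| ≤ c` and `|B ∩ I′| ≤ c`, then `|B ∩ I_odd| ≤ c` and
`|B ∩ I_even| ≤ c`. -/
theorem stmt_11 (k : ℕ) (I I' : Finset (Fin k))
    (hcover : I ∪ I' = Finset.univ) (hdisj : Disjoint I I')
    (Iodd Ieven : Finset (Fin k))
    (hodd : Iodd = Finset.univ.filter (fun j : Fin k => j.val % 2 = 0))
    (heven : Ieven = Finset.univ.filter (fun j : Fin k => j.val % 2 = 1))
    (B : Finset (Fin k))
    (hinterval : ∀ a b c : Fin k, a ∈ B → c ∈ B → a ≤ b → b ≤ c → b ∈ B)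
    (c : ℕ) (hI : (B ∩ I).card ≤ c) (hI' : (B ∩ I').card ≤ c) :
    (B ∩ Iodd).card ≤ c ∧ (B ∩ Ieven).card ≤ c := by
  rcases B.eq_empty_or_nonempty with hB | hB
  · subst hB; simp
  set m := B.min' hB with hm
  set M := B.max' hB with hM
  have hmM : m ≤ M := B.min'_le _ (B.max'_mem hB)
  have hBIcc : B = Finset.Icc m M := by
    ext x
    constructor
    · intro hx
      exact Finset.mem_Icc.mpr ⟨B.min'_le _ hx, B.le_max' _ hx⟩
    · intro hx
      obtain ⟨h1, h2⟩ := Finset.mem_Icc.mp hx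
      exact hinterval m x M (B.min'_mem hB) (B.max'_mem hB) h1 h2
  -- |B| ≤ 2c
  have hsplit : (B ∩ I) ∪ (B ∩ I') = B := by
    rw [← Finset.inter_union_distrib_left, hcover, Finset.inter_univ]
  have hdis2 : Disjoint (B ∩ I) (B ∩ I') :=
    (hdisj.mono (Finset.inter_subset_right) (Finset.inter_subset_right))
  have hcardB : B.card ≤ 2 * c := by
    have := Finset.card_union_of_disjoint hdis2
    rw [hsplit] at this
    omega
  have hlen : B.card = M.val + 1 - m.val := by
    rw [hBIcc, Fin.card_Icc]
  -- transfer filter counts to ℕ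
  have key : ∀ r : ℕ, ((Finset.Icc m M).filter (fun j : Fin k => j.val % 2 = r)).card
      = ((Finset.Icc m.val M.val).filter (fun x => x % 2 = r)).card := by
    intro r
    rw [← Fin.map_valEmbedding_Icc, Finset.filter_map, Finset.card_map]
    rfl
  have hmMv : m.val ≤ M.val := hmM
  constructor
  · have : B ∩ Iodd = (Finset.Icc m M).filter (fun j : Fin k => j.val % 2 = 0) := by
      rw [hodd, ← hBIcc]
      ext x; simp [Finset.mem_inter, Finset.mem_filter]
    rw [this, key 0]
    have := filter_mod_Icc m.val M.val 0
    omega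
  · have : B ∩ Ieven = (Finset.Icc m M).filter (fun j : Fin k => j.val % 2 = 1) := by
      rw [heven, ← hBIcc]
      ext x; simp [Finset.mem_inter, Finset.mem_filter]
    rw [this, key 1]
    have := filter_mod_Icc m.val M.val 1
    omega
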